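/- Let (p*, q*) be an equilibrium of the heterogeneous SAIS mean-field model with 0 ≤ p_i* < 1 for all i, i.e., for every i both β_i(1 − p_i* − q_i*) Σ_j a_ij p_j* + r_i β_i q_i* Σ_j a_ij p_j* − δ_i p_i* = 0 and κ_i(1 − p_i* − q_i*) Σ_j a_ij p_j* − r_i β_i q_i* Σ_j a_ij p_j* = 0. Then for every i, p_i*/(1 − p_i*) = (β_i/δ_i) · (r_i (κ̄_i + 1)/(κ̄_i + r_i)) · Σ_j a_ij p_j*, where κ̄_i = κ_i/β_i. -/

import Mathlib

open Matrix

/-- At an equilibrium `(p*, q*)` of the heterogeneous SAIS mean-field model with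
`0 ≤ pᵢ* < 1`, we have `pᵢ*/(1 - pᵢ*) = (βᵢ/δᵢ)·(rᵢ(κ̄ᵢ + 1)/(κ̄ᵢ + rᵢ))·Σⱼ aᵢⱼ pⱼ*`. -/
theorem stmt_6 {n : ℕ} (G : SimpleGraph (Fin n)) [DecidableRel G.Adj]
    (β δ κ r : Fin n → ℝ)
    (hβ : ∀ i, 0 < β i) (hδ : ∀ i, 0 < δ i) (hκ : ∀ i, 0 < κ i)
    (hr : ∀ i, 0 < r i ∧ r i < 1)
    (p q : Fin n → ℝ) (hp : ∀ i, 0 ≤ p i ∧ p i < 1)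
    (heq1 : ∀ i, β i * (1 - p i - q i) * (∑ j, G.adjMatrix ℝ i j * p j)
        + r i * β i * q i * (∑ j, G.adjMatrix ℝ i j * p j) - δ i * p i = 0)
    (heq2 : ∀ i, κ i * (1 - p i - q i) * (∑ j, G.adjMatrix ℝ i j * p j)
        - r i * β i * q i * (∑ j, G.adjMatrix ℝ i j * p j) = 0) :
    ∀ i, p i / (1 - p i)
      = (β i / δ i) * (r i * (κ i / β i + 1) / (κ i / β i + r i)) *
          (∑ j, G.adjMatrix ℝ i j * p j) := by
  intro i
  set S := ∑ j, G.adjMatrix ℝ i j * p j with hS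
  have e1 := heq1 i
  have e2 := heq2 i
  have hβi := hβ i
  have hδi := hδ i
  have hκi := hκ i
  have hri := hr i
  have hpi := hp i
  have h1p : (1 : ℝ) - p i ≠ 0 := by linarith [hpi.2]
  have hden : κ i / β i + r i ≠ 0 := by
    have := hri.1
    positivity
  rw [← hS] at e1 e2
  by_cases hS0 : S = 0
  · have hp0 : p i = 0 := by
      rw [hS0] at e1
      have : δ i * p i = 0 := by linarith
      rcases mul_eq_zero.mp this with h | h
      · exact absurd h (ne_of_gt hδi)
      · exact h
    simp [hp0, hS0]
  · -- cancel S in e2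
    have e2' : κ i * (1 - p i - q i) - r i * β i * q i = 0 := by
      have : (κ i * (1 - p i - q i) - r i * β i * q i) * S = 0 := by ring_nf; ring_nf at e2; linarith
      rcases mul_eq_zero.mp this with h | h
      · exact h
      · exact absurd h hS0
    have key : p i * (δ i * (κ i + r i * β i))
        = (1 - p i) * (r i * β i * (κ i + β i)) * S := by
      linear_combination (-(κ i + r i * β i)) * (e1 + e2) + (β i + κ i) * S * e2'
    have hD : δ i * (κ i + r i * β i) ≠ 0 := by
      have := hri.1; positivity
    have hrw : β i / δ i * (r i * (κ i / β i + 1) / (κ i / β i + r i)) * S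
        = r i * β i * (κ i + β i) * S / (δ i * (κ i + r i * β i)) := by
      rw [eq_div_iff hD]
      field_simp
      exact mul_div_cancel_right₀ _ (by have := hri.1; positivity)
    rw [div_eq_iff h1p, hrw, div_mul_eq_mul_div, eq_div_iff hD]
    linear_combination key
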